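/- (Lemma 2, one-dimensional form) Let X be a real random variable with finite fourth moment and variance σ²(X) > 0, and let N be independent of X with Gaussian law N(0, σ²), σ > 0. Set Y = X + N. Then σ²(Y) = σ²(X) + σ², and the excess kurtosis of Y satisfies κ(Y) = κ(X) · (σ²(X)/σ²(Y))² = κ(X) · (1 − σ²/σ²(Y))² = κ(X) · (1 − 1/SNR(Y))², where the signal-to-noise ratio is defined as SNR(Y) = σ²(Y)/σ². -/

import Mathlib

open MeasureTheory ProbabilityTheory

/-- Excess kurtosis of a real random variable `X` under a measure `P`: the fourth central
moment divided by the squared variance, minus 3. -/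
noncomputable def kurtRV {Ω : Type*} [MeasurableSpace Ω] (X : Ω → ℝ) (P : Measure Ω) : ℝ :=
  centralMoment X 4 P / (variance X P) ^ 2 - 3

section GaussHelpers

open Real
open scoped NNReal ENNReal

lemma gauss_integral_eq (v : ℝ≥0) (hv : v ≠ 0) (g : ℝ → ℝ) :
    ∫ x, g x ∂(gaussianReal 0 v) = ∫ x, gaussianPDFReal 0 v x * g x := by
  rw [gaussianReal_of_var_ne_zero 0 hv,
    show gaussianPDF 0 v = fun x => ((gaussianPDFReal 0 v x).toNNReal : ℝ≥0∞) from rfl,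
    integral_withDensity_eq_integral_smul (measurable_gaussianPDFReal 0 v).real_toNNReal g]
  congr 1; ext x
  simp [NNReal.smul_def, Real.coe_toNNReal _ (gaussianPDFReal_nonneg 0 v x)]

lemma gauss_integrable_iff (v : ℝ≥0) (hv : v ≠ 0) (g : ℝ → ℝ) :
    Integrable g (gaussianReal 0 v) ↔
      Integrable (fun x => gaussianPDFReal 0 v x * g x) volume := by
  rw [gaussianReal_of_var_ne_zero 0 hv,
    show gaussianPDF 0 v = fun x => ((gaussianPDFReal 0 v x).toNNReal : ℝ≥0∞) from rfl,
    integrable_withDensity_iff_integrable_smul (measurable_gaussianPDFReal 0 v).real_toNNReal]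
  constructor <;> intro h <;> (apply h.congr; refine ae_of_all _ fun x => ?_) <;>
    simp [NNReal.smul_def, Real.coe_toNNReal _ (gaussianPDFReal_nonneg 0 v x)]

lemma odd_gauss_int (b : ℝ) {k : ℕ} (hk : Odd k) :
    ∫ x : ℝ, x ^ k * Real.exp (-b * x ^ 2) = 0 := by
  have h := integral_neg_eq_self (fun x : ℝ => x ^ k * Real.exp (-b * x ^ 2)) volume
  simp only [hk.neg_pow, neg_sq, neg_mul, integral_neg] at h ⊢
  linarith

lemma even_gauss_int (b : ℝ) (hb : 0 < b) (k : ℕ) (hk : Even k) :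
    ∫ x : ℝ, x ^ k * Real.exp (-b * x ^ 2)
      = 2 * (b ^ (-((k : ℝ) + 1) / 2) * (1 / 2) * Real.Gamma (((k : ℝ) + 1) / 2)) := by
  have h1 : ∫ x : ℝ, x ^ k * Real.exp (-b * x ^ 2)
      = 2 * ∫ x in Set.Ioi (0:ℝ), x ^ k * Real.exp (-b * x ^ 2) := by
    rw [← integral_comp_abs (f := fun x => x ^ k * Real.exp (-b * x ^ 2))]
    congr 1; ext x
    rw [hk.pow_abs, sq_abs]
  rw [h1]
  congr 1
  have h2 : ∫ x in Set.Ioi (0:ℝ), x ^ k * Real.exp (-b * x ^ 2)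
      = ∫ x in Set.Ioi (0:ℝ), x ^ (k : ℝ) * Real.exp (-b * x ^ (2:ℝ)) := by
    refine setIntegral_congr_fun measurableSet_Ioi fun x _ => ?_
    rw [Real.rpow_natCast, show ((2:ℝ)) = ((2:ℕ):ℝ) by norm_num, Real.rpow_natCast]
  rw [h2, integral_rpow_mul_exp_neg_mul_rpow (by norm_num) (lt_of_lt_of_le neg_one_lt_zero (Nat.cast_nonneg k)) hb]

lemma gauss_pow_integral (v : ℝ≥0) (hv : v ≠ 0) (k : ℕ) :
    ∫ x, x ^ k ∂(gaussianReal 0 v)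
      = (Real.sqrt (2 * π * v))⁻¹ * ∫ x : ℝ, x ^ k * rexp (-(2 * (v:ℝ))⁻¹ * x ^ 2) := by
  rw [gauss_integral_eq v hv, ← integral_const_mul]
  congr 1; ext x
  rw [gaussianPDFReal, show -(x - 0)^2/(2*(v:ℝ)) = -(2*(v:ℝ))⁻¹ * x^2 by ring]
  ring

lemma gauss_moment_odd (v : ℝ≥0) (hv : v ≠ 0) {k : ℕ} (hk : Odd k) :
    ∫ x, x ^ k ∂(gaussianReal 0 v) = 0 := by
  rw [gauss_pow_integral v hv k, odd_gauss_int _ hk, mul_zero]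

lemma Gamma_three_halves : Real.Gamma ((3:ℝ)/2) = Real.sqrt π / 2 := by
  rw [show (3:ℝ)/2 = 1/2 + 1 by norm_num, Real.Gamma_add_one (by norm_num),
    Real.Gamma_one_half_eq]
  ring

lemma rpow_three_halves {t : ℝ} (ht : 0 < t) : t ^ ((3:ℝ)/2) = t * Real.sqrt t := by
  rw [show (3:ℝ)/2 = 1 + 1/2 by norm_num, Real.rpow_add ht, Real.rpow_one,
    ← Real.sqrt_eq_rpow]

lemma gauss_moment_two (v : ℝ≥0) (hv : v ≠ 0) :
    ∫ x, x ^ 2 ∂(gaussianReal 0 v) = (v : ℝ) := by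
  have hvr : (0:ℝ) < v := by exact_mod_cast pos_iff_ne_zero.mpr hv
  set t : ℝ := 2 * (v:ℝ) with ht
  have ht0 : 0 < t := by positivity
  rw [gauss_pow_integral v hv 2,
    even_gauss_int _ (inv_pos.mpr ht0) 2 (by norm_num)]
  have h1 : (t⁻¹) ^ (-(((2:ℕ):ℝ) + 1)/2) = t ^ ((3:ℝ)/2) := by
    rw [Real.inv_rpow ht0.le, show (-(((2:ℕ):ℝ) + 1)/2) = -((3:ℝ)/2) by norm_num,
      Real.rpow_neg ht0.le, inv_inv]
  rw [h1, show ((((2:ℕ):ℝ)) + 1)/2 = (3:ℝ)/2 by norm_num, Gamma_three_halves,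
    rpow_three_halves ht0, show 2*π*(v:ℝ) = π * t by rw [ht]; ring,
    Real.sqrt_mul pi_pos.le]
  have hπ : Real.sqrt π ≠ 0 := by positivity
  have hst : Real.sqrt t ≠ 0 := by positivity
  rw [show 2 * ((t * Real.sqrt t) * (1/2) * (Real.sqrt π/2))
      = (Real.sqrt π * Real.sqrt t) * (t / 2) by ring,
    inv_mul_cancel_left₀ (mul_ne_zero hπ hst)]
  rw [ht]; ring

lemma Gamma_five_halves : Real.Gamma ((5:ℝ)/2) = 3 * Real.sqrt π / 4 := by
  rw [show (5:ℝ)/2 = 3/2 + 1 by norm_num, Real.Gamma_add_one (by norm_num),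
    Gamma_three_halves]
  ring

lemma rpow_five_halves {t : ℝ} (ht : 0 < t) : t ^ ((5:ℝ)/2) = t^2 * Real.sqrt t := by
  rw [show (5:ℝ)/2 = 1 + 1 + 1/2 by norm_num, Real.rpow_add ht, Real.rpow_add ht,
    Real.rpow_one, ← Real.sqrt_eq_rpow]
  ring

lemma gauss_moment_four (v : ℝ≥0) (hv : v ≠ 0) :
    ∫ x, x ^ 4 ∂(gaussianReal 0 v) = 3 * (v : ℝ)^2 := by
  have hvr : (0:ℝ) < v := by exact_mod_cast pos_iff_ne_zero.mpr hv
  set t : ℝ := 2 * (v:ℝ) with ht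
  have ht0 : 0 < t := by positivity
  rw [gauss_pow_integral v hv 4,
    even_gauss_int _ (inv_pos.mpr ht0) 4 ⟨2, rfl⟩]
  have h1 : (t⁻¹) ^ (-(((4:ℕ):ℝ) + 1)/2) = t ^ ((5:ℝ)/2) := by
    rw [Real.inv_rpow ht0.le, show (-(((4:ℕ):ℝ) + 1)/2) = -((5:ℝ)/2) by norm_num,
      Real.rpow_neg ht0.le, inv_inv]
  rw [h1, show ((((4:ℕ):ℝ)) + 1)/2 = (5:ℝ)/2 by norm_num, Gamma_five_halves,
    rpow_five_halves ht0, show 2*π*(v:ℝ) = π * t by rw [ht]; ring,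
    Real.sqrt_mul pi_pos.le]
  have hπ : Real.sqrt π ≠ 0 := by positivity
  have hst : Real.sqrt t ≠ 0 := by positivity
  rw [show 2 * ((t^2 * Real.sqrt t) * (1/2) * (3 * Real.sqrt π/4))
      = (Real.sqrt π * Real.sqrt t) * (3 * t^2 / 4) by ring,
    inv_mul_cancel_left₀ (mul_ne_zero hπ hst)]
  rw [ht]; ring

lemma gauss_integrable_pow_four (v : ℝ≥0) (hv : v ≠ 0) :
    Integrable (fun x : ℝ => x ^ 4) (gaussianReal 0 v) := by
  have hvr : (0:ℝ) < v := by exact_mod_cast pos_iff_ne_zero.mpr hv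
  rw [gauss_integrable_iff v hv]
  have hb : (0:ℝ) < (2 * (v:ℝ))⁻¹ := by positivity
  have h := (integrable_rpow_mul_exp_neg_mul_sq hb (by norm_num : (-1:ℝ) < 4)).const_mul
      ((Real.sqrt (2 * π * v))⁻¹)
  refine h.congr (ae_of_all _ fun x => ?_)
  dsimp only
  rw [show (4:ℝ) = ((4:ℕ):ℝ) by norm_num, Real.rpow_natCast]
  rw [gaussianPDFReal, show -(x - 0)^2/(2*(v:ℝ)) = -(2*(v:ℝ))⁻¹ * x^2 by ring]
  ring

lemma gauss_memLp_four (v : ℝ≥0) (hv : v ≠ 0) :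
    MemLp (id : ℝ → ℝ) 4 (gaussianReal 0 v) := by
  have h1 : MemLp (fun x : ℝ => ‖x‖ ^ ((4:ℝ≥0∞)).toReal) 1 (gaussianReal 0 v) := by
    rw [memLp_one_iff_integrable]
    refine (gauss_integrable_pow_four v hv).congr (ae_of_all _ fun x => ?_)
    dsimp only
    rw [show ((4:ℝ≥0∞)).toReal = ((4:ℕ):ℝ) by simp, Real.rpow_natCast, Real.norm_eq_abs,
      (by decide : Even 4).pow_abs]
  have h2 : (4:ℝ≥0∞)/4 = 1 := by
    rw [ENNReal.div_self] <;> norm_num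
  rw [← h2] at h1
  exact (memLp_norm_rpow_iff aestronglyMeasurable_id (by norm_num) (by norm_num)).mp h1

lemma integrable_pow_le_four {Ω : Type*} [MeasurableSpace Ω] {P : Measure Ω}
    [IsProbabilityMeasure P] {f : Ω → ℝ} (hf : MemLp f 4 P) {k : ℕ} (hk : k ≤ 4) :
    Integrable (fun ω => f ω ^ k) P := by
  have h4 : Integrable (fun ω => ‖f ω‖ ^ ((4:ℝ≥0∞)).toReal) P := hf.integrable_norm_rpow'
  rw [show ((4:ℝ≥0∞)).toReal = ((4:ℕ):ℝ) by simp] at h4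
  simp_rw [Real.rpow_natCast] at h4
  have hb : Integrable (fun ω => 1 + ‖f ω‖ ^ (4:ℕ)) P := (integrable_const 1).add h4
  refine hb.mono' ?_ (ae_of_all _ fun ω => ?_)
  · exact (hf.aestronglyMeasurable.aemeasurable.pow_const k).aestronglyMeasurable
  · rw [norm_pow, Real.norm_eq_abs]
    rcases le_total (|f ω|) 1 with h | h
    · have h1 : |f ω| ^ k ≤ 1 := pow_le_one₀ (abs_nonneg _) h
      have h2 : (0:ℝ) ≤ |f ω| ^ (4:ℕ) := by positivity
      linarith
    · have h1 : |f ω| ^ k ≤ |f ω| ^ (4:ℕ) := pow_le_pow_right₀ h hk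
      linarith


end GaussHelpers

open Real
open scoped NNReal ENNReal

/-- Lemma 2 (one-dimensional form): if `X` has finite fourth moment and positive variance,
and `N` is independent of `X` with law `N(0, σ²)`, `σ > 0`, then `Y = X + N` satisfies
`σ²(Y) = σ²(X) + σ²` and
`κ(Y) = κ(X)·(σ²(X)/σ²(Y))² = κ(X)·(1 − σ²/σ²(Y))² = κ(X)·(1 − 1/SNR(Y))²`,
where `SNR(Y) = σ²(Y)/σ²`. -/
theorem kurtosis_of_gaussian_noisy_observation
    {Ω : Type*} [MeasurableSpace Ω] (P : Measure Ω) [IsProbabilityMeasure P]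
    (X N : Ω → ℝ) (hX4 : MemLp X 4 P) (hN : Measurable N)
    (σ : ℝ) (hσ : 0 < σ)
    (hmap : P.map N = (gaussianReal 0 (σ ^ 2).toNNReal : Measure ℝ))
    (hindep : IndepFun X N P)
    (hvar : 0 < variance X P) :
    variance (X + N) P = variance X P + σ ^ 2 ∧
    kurtRV (X + N) P = kurtRV X P * (variance X P / variance (X + N) P) ^ 2 ∧
    kurtRV (X + N) P = kurtRV X P * (1 - σ ^ 2 / variance (X + N) P) ^ 2 ∧
    kurtRV (X + N) P = kurtRV X P * (1 - 1 / (variance (X + N) P / σ ^ 2)) ^ 2 := by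
  have hσ2 : (0:ℝ) < σ ^ 2 := by positivity
  set v : ℝ≥0 := (σ ^ 2).toNNReal with hvdef
  have hvr : (v : ℝ) = σ ^ 2 := Real.coe_toNNReal _ hσ2.le
  have hv0 : v ≠ 0 := by
    intro h
    rw [h] at hvr
    simp at hvr
    linarith
  -- moments of N
  have hNmem : MemLp N 4 P := by
    have hid : MemLp (id : ℝ → ℝ) 4 (P.map N) := by rw [hmap]; exact gauss_memLp_four v hv0
    have := (memLp_map_measure_iff hid.aestronglyMeasurable hN.aemeasurable).mp hid
    simpa [Function.comp] using this
  have hEN : ∀ k : ℕ, ∫ ω, N ω ^ k ∂P = ∫ x, x ^ k ∂(gaussianReal 0 v) := by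
    intro k
    rw [← hmap, integral_map (f := fun x : ℝ => x ^ k) hN.aemeasurable (by fun_prop)]
  have hEN1 : ∫ ω, N ω ^ 1 ∂P = 0 := by rw [hEN 1, gauss_moment_odd v hv0 odd_one]
  have hEN1' : ∫ ω, N ω ∂P = 0 := by simpa [pow_one] using hEN1
  have hEN2 : ∫ ω, N ω ^ 2 ∂P = σ ^ 2 := by rw [hEN 2, gauss_moment_two v hv0, hvr]
  have hEN3 : ∫ ω, N ω ^ 3 ∂P = 0 := by rw [hEN 3, gauss_moment_odd v hv0 ⟨1, by norm_num⟩]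
  have hEN4 : ∫ ω, N ω ^ 4 ∂P = 3 * (σ^2)^2 := by
    rw [hEN 4, gauss_moment_four v hv0, hvr]
  -- centered X
  set m : ℝ := ∫ ω, X ω ∂P with hm
  set X' : Ω → ℝ := fun ω => X ω - m with hX'def
  have hX'mem : MemLp X' 4 P := hX4.sub (memLp_const m)
  have hXint : Integrable X P := hX4.integrable (by norm_num)
  have hNint : Integrable N P := hNmem.integrable (by norm_num)
  have hX'int : ∀ k : ℕ, k ≤ 4 → Integrable (fun ω => X' ω ^ k) P :=
    fun k hk => integrable_pow_le_four hX'mem hk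
  have hNkint : ∀ k : ℕ, k ≤ 4 → Integrable (fun ω => N ω ^ k) P :=
    fun k hk => integrable_pow_le_four hNmem hk
  have hEX' : ∫ ω, X' ω ∂P = 0 := by
    simp only [hX'def]
    rw [integral_sub hXint (integrable_const m)]
    simp [hm]
  have hEX'1 : ∫ ω, X' ω ^ 1 ∂P = 0 := by simpa [pow_one] using hEX'
  -- variances
  have hN2 : MemLp N 2 P := hNmem.mono_exponent (by norm_num)
  have hX2 : MemLp X 2 P := hX4.mono_exponent (by norm_num)
  have hvarN : variance N P = σ ^ 2 := by
    rw [variance_eq_sub hN2]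
    simp only [Pi.pow_apply]
    rw [hEN2, hEN1']
    ring
  have hvarsum : variance (X + N) P = variance X P + σ ^ 2 := by
    rw [IndepFun.variance_add hX2 hN2 hindep, hvarN]
  -- central moments as integrals of centered variables
  have hsum_int : ∫ ω, (X ω + N ω) ∂P = m := by
    rw [integral_add hXint hNint, hEN1', add_zero]
  have hcm4 : centralMoment (X + N) 4 P = ∫ ω, (X' ω + N ω) ^ 4 ∂P := by
    have h0 : centralMoment (X + N) 4 P
        = ∫ ω, ((X ω + N ω) - ∫ x, (X x + N x) ∂P) ^ 4 ∂P := rfl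
    rw [h0, hsum_int]
    congr 1; funext ω
    simp only [hX'def]; ring
  have hcmX4 : centralMoment X 4 P = ∫ ω, X' ω ^ 4 ∂P := rfl
  have hcmX2 : ∫ ω, X' ω ^ 2 ∂P = variance X P := by
    have h0 : centralMoment X 2 P = ∫ ω, X' ω ^ 2 ∂P := rfl
    rw [← h0, centralMoment_two_eq_variance hX2.aemeasurable]
  -- independence of powers
  have hiXN : ∀ i j : ℕ, IndepFun (fun ω => X' ω ^ i) (fun ω => N ω ^ j) P := fun i j =>
    hindep.comp ((measurable_id.sub_const m).pow_const i) (measurable_id.pow_const j)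
  have hcross_int : ∀ i j : ℕ, i ≤ 4 → j ≤ 4 →
      Integrable (fun ω => X' ω ^ i * N ω ^ j) P := fun i j hi hj =>
    (hiXN i j).integrable_mul (hX'int i hi) (hNkint j hj)
  have hcross : ∀ i j : ℕ, i ≤ 4 → j ≤ 4 →
      ∫ ω, X' ω ^ i * N ω ^ j ∂P = (∫ ω, X' ω ^ i ∂P) * ∫ ω, N ω ^ j ∂P := fun i j hi hj =>
    (hiXN i j).integral_fun_mul_eq_mul_integral (hX'int i hi).aestronglyMeasurable (hNkint j hj).aestronglyMeasurable
  -- expand the fourth central moment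
  have hμ4Y : centralMoment (X + N) 4 P
      = centralMoment X 4 P + 6 * variance X P * σ ^ 2 + 3 * (σ^2)^2 := by
    have hexp : centralMoment (X + N) 4 P
        = ∫ ω, (X' ω ^ 4 + (4 * (X' ω ^ 3 * N ω ^ 1) + (6 * (X' ω ^ 2 * N ω ^ 2)
            + (4 * (X' ω ^ 1 * N ω ^ 3) + N ω ^ 4)))) ∂P := by
      rw [hcm4]; congr 1; funext ω; ring
    have eD : ∫ ω, (4 * (X' ω ^ 1 * N ω ^ 3) + N ω ^ 4) ∂P
        = (∫ ω, 4 * (X' ω ^ 1 * N ω ^ 3) ∂P) + ∫ ω, N ω ^ 4 ∂P :=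
      integral_add ((hcross_int 1 3 (by norm_num) (by norm_num)).const_mul 4) (hNkint 4 le_rfl)
    have eC : ∫ ω, (6 * (X' ω ^ 2 * N ω ^ 2) + (4 * (X' ω ^ 1 * N ω ^ 3) + N ω ^ 4)) ∂P
        = (∫ ω, 6 * (X' ω ^ 2 * N ω ^ 2) ∂P)
          + ∫ ω, (4 * (X' ω ^ 1 * N ω ^ 3) + N ω ^ 4) ∂P :=
      integral_add ((hcross_int 2 2 (by norm_num) (by norm_num)).const_mul 6)
        (((hcross_int 1 3 (by norm_num) (by norm_num)).const_mul 4).add (hNkint 4 le_rfl))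
    have eB : ∫ ω, (4 * (X' ω ^ 3 * N ω ^ 1) + (6 * (X' ω ^ 2 * N ω ^ 2)
            + (4 * (X' ω ^ 1 * N ω ^ 3) + N ω ^ 4))) ∂P
        = (∫ ω, 4 * (X' ω ^ 3 * N ω ^ 1) ∂P)
          + ∫ ω, (6 * (X' ω ^ 2 * N ω ^ 2) + (4 * (X' ω ^ 1 * N ω ^ 3) + N ω ^ 4)) ∂P :=
      integral_add ((hcross_int 3 1 (by norm_num) (by norm_num)).const_mul 4)
        (((hcross_int 2 2 (by norm_num) (by norm_num)).const_mul 6).add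
          (((hcross_int 1 3 (by norm_num) (by norm_num)).const_mul 4).add (hNkint 4 le_rfl)))
    have eA : ∫ ω, (X' ω ^ 4 + (4 * (X' ω ^ 3 * N ω ^ 1) + (6 * (X' ω ^ 2 * N ω ^ 2)
            + (4 * (X' ω ^ 1 * N ω ^ 3) + N ω ^ 4)))) ∂P
        = (∫ ω, X' ω ^ 4 ∂P) + ∫ ω, (4 * (X' ω ^ 3 * N ω ^ 1) + (6 * (X' ω ^ 2 * N ω ^ 2)
            + (4 * (X' ω ^ 1 * N ω ^ 3) + N ω ^ 4))) ∂P :=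
      integral_add (hX'int 4 le_rfl)
        (((hcross_int 3 1 (by norm_num) (by norm_num)).const_mul 4).add
          (((hcross_int 2 2 (by norm_num) (by norm_num)).const_mul 6).add
            (((hcross_int 1 3 (by norm_num) (by norm_num)).const_mul 4).add (hNkint 4 le_rfl))))
    rw [hexp, eA, eB, eC, eD, integral_const_mul, integral_const_mul, integral_const_mul]
    rw [hcross 3 1 (by norm_num) (by norm_num), hcross 2 2 (by norm_num) (by norm_num),
      hcross 1 3 (by norm_num) (by norm_num), hEN1, hEN2, hEN3, hEN4, hEX'1, hcmX2, hcmX4]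
    ring
  -- conclusion
  have hvX : variance X P ≠ 0 := ne_of_gt hvar
  have hsumpos : 0 < variance X P + σ ^ 2 := by linarith
  have hsumne : variance X P + σ ^ 2 ≠ 0 := ne_of_gt hsumpos
  have hs2 : σ ^ 2 ≠ 0 := ne_of_gt hσ2
  refine ⟨hvarsum, ?_, ?_, ?_⟩ <;>
    (simp only [kurtRV]; rw [hvarsum, hμ4Y]; field_simp; ring)
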